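/- Let N_1, N_2 be nilpotent n×n complex matrices. If every entry of the matrix (Id − t^{−1}N_2)·(Id + t^{−1}N_1 + t^{−2}N_1² + ⋯ + t^{−(n−1)}N_1^{n−1}) ∈ M_n(F) lies in the subring A = ℂ[[t]], then N_1 = N_2. (This is the injectivity of the map ψ : 𝒩 → SL_n(F)/G_0, N ↦ (Id + t^{−1}N + t^{−2}N² + ⋯) mod G_0, where 𝒩 is the variety of nilpotent n×n matrices.) -/

import Mathlib

/-! Statement 2: injectivity of Lusztig's map `ψ : 𝒩 → SL_n(F)/G₀`,
`N ↦ (Id + t⁻¹N + t⁻²N² + ⋯) mod G₀`. -/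

noncomputable section

noncomputable section

/-- The field of formal Laurent series over `ℂ`. -/
abbrev FF : Type := LaurentSeries ℂ

/-- The uniformizer `t` of `ℂ((t))`. -/
def tF : FF := HahnSeries.single (1 : ℤ) (1 : ℂ)

/-- An element of `F = ℂ((t))` is integral if it lies in `A = ℂ[[t]]`,
i.e. all coefficients of negative index vanish. -/
def Integral (x : FF) : Prop := ∀ m : ℤ, m < 0 → x.coeff m = 0

/-- Membership in `G₀ = SL_n(ℂ[[t]])`: all entries integral and determinant `1`. -/
def MemG0 {n : ℕ} (g : Matrix (Fin n) (Fin n) FF) : Prop :=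
  g.det = 1 ∧ ∀ i j : Fin n, Integral (g i j)

/-- Membership in the Iwahori subgroup `𝓑`: all entries integral, determinant `1`,
and the matrix of constant terms `h(0)` is upper triangular. -/
def MemIwahori {n : ℕ} (h : Matrix (Fin n) (Fin n) FF) : Prop :=
  h.det = 1 ∧ (∀ i j : Fin n, Integral (h i j)) ∧
    ∀ i j : Fin n, (j : ℕ) < (i : ℕ) → (h i j).coeff 0 = 0

/-- The element `κ = diag(t, t, …, t, t^{-(n-1)})` of `SL_n(F)`. -/
def kappaMat (n : ℕ) : Matrix (Fin n) (Fin n) FF :=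
  Matrix.diagonal fun i => if (i : ℕ) = n - 1 then tF ^ (-((n : ℤ) - 1)) else tF

/-- A complex matrix viewed as a matrix over `F = ℂ((t))`. -/
def liftC {n : ℕ} (Y : Matrix (Fin n) (Fin n) ℂ) : Matrix (Fin n) (Fin n) FF :=
  Y.map (algebraMap ℂ FF)

/-- For a nilpotent complex matrix `Y`, the element
`Ȳ = Id + t⁻¹Y + t⁻²Y² + ⋯ + t^{-(n-1)}Y^{n-1}` of `SL_n(F)`. -/
def Ybar {n : ℕ} (Y : Matrix (Fin n) (Fin n) ℂ) : Matrix (Fin n) (Fin n) FF :=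
  ∑ k ∈ Finset.range n, tF ^ (-(k : ℤ)) • liftC (Y ^ k)


lemma tF_inv : tF⁻¹ = HahnSeries.single (-1 : ℤ) (1 : ℂ) := by
  apply inv_eq_of_mul_eq_one_right
  rw [tF, HahnSeries.single_mul_single]
  norm_num [HahnSeries.single_zero_one]

lemma tF_zpow_neg (k : ℕ) : tF ^ (-(k : ℤ)) = HahnSeries.single (-(k : ℤ)) (1 : ℂ) := by
  rw [zpow_neg, zpow_natCast, tF, HahnSeries.single_pow]
  apply inv_eq_of_mul_eq_one_right
  rw [HahnSeries.single_mul_single]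
  norm_num [HahnSeries.single_zero_one]

lemma coeff_sum {ι : Type*} (s : Finset ι) (f : ι → FF) (g : ℤ) :
    (∑ i ∈ s, f i).coeff g = ∑ i ∈ s, (f i).coeff g :=
  map_sum (HahnSeries.coeff.addMonoidHom g) f s

lemma liftC_apply {n : ℕ} (Y : Matrix (Fin n) (Fin n) ℂ) (i j : Fin n) :
    liftC Y i j = HahnSeries.single (0 : ℤ) (Y i j) := by
  simp only [liftC, Matrix.map_apply, HahnSeries.algebraMap_apply',
    PowerSeries.algebraMap_apply, HahnSeries.ofPowerSeries_C, HahnSeries.C_apply, Algebra.algebraMap_self, RingHom.id_apply]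

lemma smul_liftC_apply {n : ℕ} (k : ℕ) (Y : Matrix (Fin n) (Fin n) ℂ) (i j : Fin n) :
    (tF ^ (-(k : ℤ)) • liftC Y) i j = HahnSeries.single (-(k : ℤ)) (Y i j) := by
  rw [Matrix.smul_apply, liftC_apply, smul_eq_mul, tF_zpow_neg,
    HahnSeries.single_mul_single]
  norm_num

lemma entry_coeff {n : ℕ} (N₁ N₂ : Matrix (Fin n) (Fin n) ℂ) (i j : Fin n) :
    (((1 - tF⁻¹ • liftC N₂) * Ybar N₁) i j).coeff (-1) =
      (if 1 ∈ Finset.range n then N₁ i j else 0) - N₂ i j := by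
  have hn : (0 : ℕ) ∈ Finset.range n := Finset.mem_range.2 i.pos
  rw [sub_mul, one_mul, Matrix.smul_mul tF⁻¹ (liftC N₂) (Ybar N₁), Matrix.sub_apply, HahnSeries.coeff_sub]
  have h1 : ((Ybar N₁) i j).coeff (-1) = if 1 ∈ Finset.range n then N₁ i j else 0 := by
    rw [Ybar, Matrix.sum_apply]
    rw [show ((∑ k ∈ Finset.range n, (tF ^ (-(k:ℤ)) • liftC (N₁ ^ k)) i j) : FF)
      = ∑ k ∈ Finset.range n, HahnSeries.single (-(k:ℤ)) ((N₁^k) i j) from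
      Finset.sum_congr rfl fun k _ => smul_liftC_apply k _ i j]
    rw [coeff_sum]
    rw [show (∑ k ∈ Finset.range n, ((HahnSeries.single (-(k:ℤ)) ((N₁^k) i j) : FF)).coeff (-1))
      = ∑ k ∈ Finset.range n, if k = 1 then N₁ i j else 0 from
      Finset.sum_congr rfl fun k _ => by
        rw [HahnSeries.coeff_single]
        by_cases hk : k = 1 <;> simp [hk] <;> omega]
    rw [Finset.sum_ite_eq' (Finset.range n) 1 (fun _ => N₁ i j)]
  have h2 : ((tF⁻¹ • (liftC N₂ * Ybar N₁)) i j).coeff (-1) = N₂ i j := by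
    have hm : liftC N₂ * Ybar N₁ = ∑ k ∈ Finset.range n, tF ^ (-(k:ℤ)) • liftC (N₂ * N₁ ^ k) := by
      rw [Ybar, Finset.mul_sum]
      refine Finset.sum_congr rfl fun k _ => ?_
      rw [Matrix.mul_smul (liftC N₂) (tF ^ (-(k:ℤ))) (liftC (N₁ ^ k))]
      congr 1
      rw [liftC, liftC, liftC, ← Matrix.map_mul]
    rw [hm, Matrix.smul_apply, Matrix.sum_apply, smul_eq_mul, tF_inv, Finset.mul_sum]
    rw [show (∑ k ∈ Finset.range n, (HahnSeries.single (-1:ℤ) (1:ℂ) : FF) *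
          (tF ^ (-(k:ℤ)) • liftC (N₂ * N₁ ^ k)) i j)
        = ∑ k ∈ Finset.range n, HahnSeries.single (-(k:ℤ) - 1) ((N₂ * N₁ ^ k) i j) from
      Finset.sum_congr rfl fun k _ => by
        rw [smul_liftC_apply, HahnSeries.single_mul_single, one_mul]
        ring_nf]
    rw [coeff_sum]
    rw [show (∑ k ∈ Finset.range n,
          ((HahnSeries.single (-(k:ℤ) - 1) ((N₂ * N₁ ^ k) i j) : FF)).coeff (-1))
        = ∑ k ∈ Finset.range n, if k = 0 then N₂ i j else 0 from
      Finset.sum_congr rfl fun k _ => by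
        rw [HahnSeries.coeff_single]
        by_cases hk : k = 0 <;> simp [hk] <;> omega]
    rw [Finset.sum_ite_eq' (Finset.range n) 0 (fun _ => N₂ i j)]
    simp [hn]
  rw [h1, h2]

/-- If `N₁, N₂` are nilpotent and every entry of
`(Id − t⁻¹N₂)·(Id + t⁻¹N₁ + ⋯ + t^{-(n-1)}N₁^{n-1})` is integral, then `N₁ = N₂`. -/
theorem stmt2 {n : ℕ} (N₁ N₂ : Matrix (Fin n) (Fin n) ℂ)
    (h₁ : IsNilpotent N₁) (h₂ : IsNilpotent N₂)
    (hint : ∀ i j : Fin n, Integral (((1 - tF⁻¹ • liftC N₂) * Ybar N₁) i j)) :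
    N₁ = N₂ := by
  rcases Nat.lt_or_ge n 2 with hn | hn
  · have e1 : ∀ (M : Matrix (Fin 1) (Fin 1) ℂ), IsNilpotent M → M = 0 := by
      intro M hM
      obtain ⟨m, hm⟩ := hM
      have hd' := congrArg Matrix.det hm
      rw [Matrix.det_pow, Matrix.det_fin_one, Matrix.det_zero] at hd'
      have hd : M 0 0 = 0 := ((pow_eq_zero_iff').mp hd').1
      ext i j
      have hi : i = 0 := Subsingleton.elim _ _
      have hj : j = 0 := Subsingleton.elim _ _
      simp [hi, hj, hd]
    interval_cases n
    · ext i j; exact i.elim0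
    · rw [e1 N₁ h₁, e1 N₂ h₂]
  · ext i j
    have h := hint i j (-1) (by norm_num)
    rw [entry_coeff] at h
    rw [if_pos (Finset.mem_range.2 (by omega))] at h
    exact sub_eq_zero.mp h

end
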